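/- For an entire function f(z) = C·z·∏_{k=1}^∞(1 - z/a_k) with 0 < a_1 < a_2 < ⋯ and ∑ 1/a_k < ∞, the modulus |f'| attains its minimum on each circle {|z| = r} at the point z = r on the positive real axis. -/

import Mathlib

open Finset Polynomial Filter Metric Topology


lemma aux_prod_sub_one (s : Finset ℕ) (g : ℕ → ℂ) :
    ‖∏ i ∈ s, (1 + g i) - 1‖ ≤ ∏ i ∈ s, (1 + ‖g i‖) - 1 := by
  classical
  induction s using Finset.cons_induction with
  | empty => simp
  | cons a t ha ih =>
    rw [Finset.prod_cons, Finset.prod_cons]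
    have h1 : (1 + g a) * ∏ i ∈ t, (1 + g i) - 1
        = (1 + g a) * (∏ i ∈ t, (1 + g i) - 1) + g a := by ring
    rw [h1]
    have h2 : ‖(1 + g a) * (∏ i ∈ t, (1 + g i) - 1)‖ ≤ (1 + ‖g a‖) * (∏ i ∈ t, (1 + ‖g i‖) - 1) := by
      rw [norm_mul]
      refine mul_le_mul ?_ ih (norm_nonneg _) (by positivity)
      calc ‖1 + g a‖ ≤ ‖(1:ℂ)‖ + ‖g a‖ := norm_add_le _ _
      _ = 1 + ‖g a‖ := by simp
    calc ‖(1 + g a) * (∏ i ∈ t, (1 + g i) - 1) + g a‖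
        ≤ ‖(1 + g a) * (∏ i ∈ t, (1 + g i) - 1)‖ + ‖g a‖ := norm_add_le _ _
      _ ≤ (1 + ‖g a‖) * (∏ i ∈ t, (1 + ‖g i‖) - 1) + ‖g a‖ := by linarith
      _ = (1 + ‖g a‖) * ∏ i ∈ t, (1 + ‖g i‖) - 1 := by ring

lemma aux_multiset_prod_le (m : Multiset ℂ) (u v : ℂ → ℝ)
    (h : ∀ w ∈ m, 0 ≤ u w ∧ u w ≤ v w) :
    (m.map u).prod ≤ (m.map v).prod := by
  induction m using Multiset.induction_on with
  | empty => simp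
  | cons w t ih =>
    simp only [Multiset.map_cons, Multiset.prod_cons]
    have hw := h w (Multiset.mem_cons_self _ _)
    have ht : ∀ x ∈ t, 0 ≤ u x ∧ u x ≤ v x := fun x hx => h x (Multiset.mem_cons_of_mem hx)
    have h1 : (0:ℝ) ≤ (t.map u).prod := Multiset.prod_nonneg (by
      intro x hx
      obtain ⟨y, hy, rfl⟩ := Multiset.mem_map.mp hx
      exact (ht y hy).1)
    exact mul_le_mul hw.2 (ih ht) h1 (hw.1.trans hw.2)

lemma aux_poly_min (q : ℂ[X]) (hroots : ∀ w ∈ q.roots, ∃ t : ℝ, 0 ≤ t ∧ w = (t:ℂ))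
    (z : ℂ) (r : ℝ) (hz : ‖z‖ = r) :
    ‖q.eval (r:ℂ)‖ ≤ ‖q.eval z‖ := by
  rcases eq_or_ne q 0 with rfl | hq
  · simp
  have hsp : q.Splits := IsAlgClosed.splits q
  have hq' := hsp.eq_prod_roots
  have keval : ∀ w : ℂ, q.eval w = q.leadingCoeff * (q.roots.map fun b => w - b).prod := by
    intro w
    conv_lhs => rw [hq']
    rw [eval_mul, eval_C, eval_multiset_prod, Multiset.map_map]
    congr 2
    ext b
    simp
  rw [keval, keval, norm_mul, norm_mul]
  refine mul_le_mul_of_nonneg_left ?_ (norm_nonneg _)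
  have hn : ∀ m : Multiset ℂ, ‖m.prod‖ = (m.map (fun x => ‖x‖)).prod :=
    fun m => map_multiset_prod (normHom : ℂ →*₀ ℝ) m
  rw [hn, hn,
    Multiset.map_map, Multiset.map_map]
  refine aux_multiset_prod_le _ _ _ ?_
  intro w hw
  obtain ⟨t, ht0, rfl⟩ := hroots w hw
  constructor
  · exact norm_nonneg _
  · simp only [Function.comp_apply]
    have h1 : ‖(r:ℂ) - (t:ℂ)‖ = |r - t| := by
      rw [← Complex.ofReal_sub, Complex.norm_real, Real.norm_eq_abs]
    have h2 : |‖z‖ - ‖(t:ℂ)‖| ≤ ‖z - t‖ :=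
      abs_norm_sub_norm_le _ _
    rw [h1]
    rw [hz, Complex.norm_real, Real.norm_eq_abs, abs_of_nonneg ht0] at h2
    exact h2



lemma aux_roots (Cc : ℝ) (hC : Cc ≠ 0) (b : ℕ → ℝ) (hb : ∀ k, 0 < b k) (hbm : StrictMono b)
    (n : ℕ) :
    ∀ w ∈ (((Polynomial.C Cc * (X * ∏ k ∈ Finset.range n,
        (1 - Polynomial.C (b k)⁻¹ * X))).map (algebraMap ℝ ℂ)).derivative).roots,
      ∃ t : ℝ, 0 ≤ t ∧ w = (t : ℂ) := by
  classical
  set g : ℝ[X] := ∏ k ∈ Finset.range n, (1 - Polynomial.C (b k)⁻¹ * X) with hg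
  set p : ℝ[X] := Polynomial.C Cc * (X * g) with hp
  -- nodes
  set node : ℕ → ℝ := fun i => match i with | 0 => 0 | k+1 => b k with hnodedef
  have hnode : StrictMono node := by
    apply strictMono_nat_of_lt_succ
    intro i
    match i with
    | 0 => exact hb 0
    | k+1 => exact hbm (lt_add_one k)
  have hnodenn : ∀ i, 0 ≤ node i := by
    intro i
    match i with
    | 0 => exact le_refl _
    | k+1 => exact (hb k).le
  -- evaluation at nodes is zero
  have heval : ∀ i ≤ n, p.eval (node i) = 0 := by
    intro i hi
    match i with
    | 0 => simp [hp, node]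
    | k+1 =>
      have hk : k ∈ Finset.range n := Finset.mem_range.mpr hi
      have : g.eval (b k) = 0 := by
        rw [hg, eval_prod]
        refine Finset.prod_eq_zero hk ?_
        simp [inv_mul_cancel₀ (hb k).ne']
      simp [hp, eval_mul, this, node]
  -- Rolle
  have rolle : ∀ i, ∃ t : ℝ, i < n →
      t ∈ Set.Ioo (node i) (node (i+1)) ∧ p.derivative.eval t = 0 := by
    intro i
    by_cases hi : i < n
    · obtain ⟨c, hc, hc'⟩ := exists_deriv_eq_zero (f := fun x => p.eval x)
        (hnode (lt_add_one i))
        (p.continuous_aeval.continuousOn)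
        (by show p.eval _ = p.eval _; rw [heval i (le_of_lt hi), heval (i+1) hi])
      refine ⟨c, fun _ => ⟨hc, ?_⟩⟩
      rwa [Polynomial.deriv] at hc'
    · exact ⟨0, fun h => absurd h hi⟩
  choose t ht using rolle
  have tmono : ∀ i j, j < n → i < j → t i < t j := by
    intro i j hj hij
    have hi : i < n := hij.trans hj
    calc t i < node (i+1) := ((ht i hi).1).2
      _ ≤ node j := hnode.monotone hij
      _ < t j := ((ht j hj).1).1
  have tpos : ∀ i, i < n → 0 ≤ t i := fun i hi =>
    le_of_lt (lt_of_le_of_lt (hnodenn i) ((ht i hi).1).1)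
  -- the complex polynomial
  set Q' : ℂ[X] := (p.map (algebraMap ℝ ℂ)).derivative with hQ'
  have hQ'map : Q' = (p.derivative).map (algebraMap ℝ ℂ) := (derivative_map p (algebraMap ℝ ℂ))
  have hpd : p.derivative ≠ 0 := by
    intro h
    have h1 : p.derivative.coeff 0 = p.coeff (0+1) * ((0:ℕ)+1 : ℝ) := coeff_derivative p 0
    norm_num at h1
    have h2 : p.coeff 1 = Cc := by
      rw [hp, coeff_C_mul, coeff_X_mul, coeff_zero_eq_eval_zero, hg, eval_prod]
      simp
    rw [h, coeff_zero, h2] at h1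
    exact hC h1.symm
  have hQ'0 : Q' ≠ 0 := by
    rw [hQ'map]
    exact (Polynomial.map_ne_zero_iff (algebraMap ℝ ℂ).injective).mpr hpd
  have hdeg : Q'.natDegree ≤ n := by
    have h1 : p.natDegree ≤ n + 1 := by
      calc p.natDegree ≤ (Polynomial.C Cc).natDegree + (X * g).natDegree := natDegree_mul_le
        _ ≤ 0 + (X.natDegree + g.natDegree) := by
            gcongr
            · exact le_of_eq (natDegree_C _)
            · exact natDegree_mul_le
        _ ≤ 0 + (1 + n) := by
            gcongr
            · exact le_of_eq natDegree_X
            · calc g.natDegree ≤ ∑ k ∈ Finset.range n,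
                  (1 - Polynomial.C (b k)⁻¹ * X).natDegree := natDegree_prod_le _ _
                _ ≤ ∑ _k ∈ Finset.range n, 1 := by
                    refine Finset.sum_le_sum fun k _ => ?_
                    refine (natDegree_sub_le _ _).trans ?_
                    simp only [natDegree_one, zero_le, max_eq_right]
                    exact (natDegree_C_mul_le _ _).trans (le_of_eq natDegree_X)
                _ = n := by simp
        _ = n + 1 := by ring
    calc Q'.natDegree ≤ (p.map (algebraMap ℝ ℂ)).natDegree - 1 := natDegree_derivative_le _
      _ ≤ (n + 1) - 1 := by
          have h2 : (p.map (algebraMap ℝ ℂ)).natDegree ≤ p.natDegree := natDegree_map_le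
          omega
      _ = n := by omega
  -- the finset of found roots
  set S : Finset ℂ := (Finset.range n).image (fun i => ((t i : ℝ) : ℂ)) with hS
  have hSsub : S ⊆ Q'.roots.toFinset := by
    intro w hw
    rw [hS, Finset.mem_image] at hw
    obtain ⟨i, hi, rfl⟩ := hw
    rw [Multiset.mem_toFinset, Polynomial.mem_roots hQ'0]
    rw [hQ'map]
    show ((p.derivative).map (algebraMap ℝ ℂ)).eval _ = 0
    have : ((t i : ℝ) : ℂ) = algebraMap ℝ ℂ (t i) := rfl
    rw [this, Polynomial.eval_map, Polynomial.eval₂_at_apply,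
      (ht i (Finset.mem_range.mp hi)).2]
    simp
  have hScard : S.card = n := by
    rw [hS]
    rw [Finset.card_image_of_injOn, Finset.card_range]
    intro i hi j hj hij
    rw [Finset.mem_coe, Finset.mem_range] at hi hj
    by_contra hne
    rcases lt_or_gt_of_ne hne with h | h
    · exact absurd (congrArg Complex.re hij)
        (by simpa using (tmono i j hj h).ne)
    · exact absurd (congrArg Complex.re hij)
        (by simpa using (tmono j i hi h).ne')
  have hfin : S = Q'.roots.toFinset := by
    refine Finset.eq_of_subset_of_card_le hSsub ?_
    calc Q'.roots.toFinset.card ≤ Multiset.card Q'.roots := Multiset.toFinset_card_le _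
      _ ≤ Q'.natDegree := card_roots' _
      _ ≤ n := hdeg
      _ = S.card := hScard.symm
  intro w hw
  have : w ∈ S := by
    rw [hfin]
    exact Multiset.mem_toFinset.mpr hw
  rw [hS, Finset.mem_image] at this
  obtain ⟨i, hi, rfl⟩ := this
  exact ⟨t i, tpos i (Finset.mem_range.mp hi), rfl⟩


/-- For f(z) = C·z·∏(1 - z/a_k) with 0 < a_1 < a_2 < ⋯ and ∑ 1/a_k < ∞, the modulus
|f'| attains its minimum on each circle {|z| = r} at the point z = r. -/
theorem stmt12 (a : ℕ → ℝ) (hpos : ∀ k : ℕ, 0 < a (k+1))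
    (hmono : StrictMono (fun k : ℕ => a (k+1)))
    (hsum : Summable (fun k : ℕ => 1 / a (k+1)))
    (C : ℝ) (hC : 0 < C) (f : ℂ → ℂ)
    (hf : ∀ z, f z = C * z * ∏' k : ℕ, (1 - z / (a (k+1) : ℂ)))
    (hd : Differentiable ℂ f) (r : ℝ) (hr : 0 < r) :
    ∀ z : ℂ, ‖z‖ = r →
      ‖deriv f (r : ℂ)‖ ≤ ‖deriv f z‖ := by
  intro z hz
  set b : ℕ → ℝ := fun k => a (k+1) with hbdef
  have hb : ∀ k, 0 < b k := hpos
  have hbm : StrictMono b := hmono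
  have hbsum : Summable fun k => 1 / b k := hsum
  set p : ℕ → ℝ[X] := fun n =>
    Polynomial.C C * (X * ∏ k ∈ Finset.range n, (1 - Polynomial.C (b k)⁻¹ * X)) with hpdef
  set F : ℕ → ℂ → ℂ := fun n w => ((p n).map (algebraMap ℝ ℂ)).eval w with hFdef
  -- explicit formula for F
  have hFeq : ∀ n w, F n w = (C:ℂ) * w * ∏ k ∈ Finset.range n, (1 - w / (b k : ℂ)) := by
    intro n w
    simp only [hFdef, hpdef, Polynomial.map_mul, Polynomial.map_prod, Polynomial.map_sub,
      Polynomial.map_one, Polynomial.map_C, Polynomial.map_X, eval_mul, eval_prod, eval_sub,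
      eval_one, eval_C, eval_X]
    rw [← mul_assoc]
    congr 1
    refine Finset.prod_congr rfl fun k _ => ?_
    congr 1
    rw [Complex.coe_algebraMap, Complex.ofReal_inv]
    field_simp
  -- per-n inequality at the minimum point
  have hstep : ∀ n, ‖deriv (F n) (r:ℂ)‖ ≤ ‖deriv (F n) z‖ := by
    intro n
    have hdn : ∀ w : ℂ, deriv (F n) w = ((p n).map (algebraMap ℝ ℂ)).derivative.eval w := by
      intro w
      have : F n = fun x => ((p n).map (algebraMap ℝ ℂ)).eval x := by funext x; rfl
      rw [this]
      exact Polynomial.deriv (p := (p n).map (algebraMap ℝ ℂ))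
    rw [hdn, hdn]
    exact aux_poly_min _ (aux_roots C hC.ne' b hb hbm n) z r hz
  -- pointwise convergence
  have hatop : Tendsto (fun k => 1 / b k) atTop (𝓝 0) := hbsum.tendsto_atTop_zero
  have hptw : ∀ w : ℂ, Tendsto (fun n => F n w) atTop (𝓝 (f w)) := by
    intro w
    have hprod : Tendsto (fun n => ∏ k ∈ Finset.range n, (1 - w / (b k : ℂ))) atTop
        (𝓝 (∏' k : ℕ, (1 - w / (b k : ℂ)))) := by
      by_cases hzero : ∃ j, (1 : ℂ) - w / (b j : ℂ) = 0
      · obtain ⟨j, hj⟩ := hzero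
        have h0 : HasProd (fun k => 1 - w / (b k : ℂ)) 0 := by
          rw [HasProd]
          refine Tendsto.congr' ?_ tendsto_const_nhds
          filter_upwards [Filter.eventually_ge_atTop ({j} : Finset ℕ)] with s hs
          exact (Finset.prod_eq_zero (hs (Finset.mem_singleton_self j)) hj).symm
        rw [h0.tprod_eq]
        exact h0.tendsto_prod_nat
      · push_neg at hzero
        have hlog : Summable fun k => Complex.log (1 - w / (b k : ℂ)) := by
          have hev : ∀ᶠ k in atTop, ‖Complex.log (1 - w / (b k : ℂ))‖
              ≤ 3/2 * ‖w‖ * (1 / b k) := by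
            have hlt : ∀ᶠ k in atTop, 1 / b k < 1 / (2 * ‖w‖ + 1) :=
              hatop.eventually_lt_const (by positivity)
            filter_upwards [hlt] with k hk
            have hbk := hb k
            have habs : ‖-(w / (b k : ℂ))‖ = ‖w‖ * (1 / b k) := by
              rw [norm_neg, norm_div, Complex.norm_real, Real.norm_eq_abs, abs_of_pos hbk]
              rw [div_eq_mul_one_div]
            have hhalf : ‖-(w / (b k : ℂ))‖ ≤ 1/2 := by
              rw [habs]
              have h1 : (0:ℝ) ≤ ‖w‖ := norm_nonneg _
              have h2 : 0 < 1 / b k := by positivity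
              have h3 := mul_le_mul_of_nonneg_left hk.le h1
              have h4 : 0 < 2 * ‖w‖ + 1 := by positivity
              have h5 : ‖w‖ * (1 / (2 * ‖w‖ + 1)) ≤ 1/2 := by
                rw [mul_one_div, div_le_iff₀ h4]
                linarith
              linarith
            have := Complex.norm_log_one_add_half_le_self hhalf
            have heq : (1 : ℂ) + -(w / (b k : ℂ)) = 1 - w / (b k : ℂ) := by ring
            rw [heq] at this
            rw [habs] at this
            calc ‖Complex.log (1 - w / (b k : ℂ))‖ ≤ 3/2 * (‖w‖ * (1 / b k)) := this
              _ = 3/2 * ‖w‖ * (1 / b k) := by ring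
          refine Summable.of_norm_bounded_eventually ((hbsum.mul_left (3/2 * ‖w‖))) ?_
          rwa [Nat.cofinite_eq_atTop]
        have hmul : Multipliable fun k => 1 - w / (b k : ℂ) :=
          Complex.multipliable_of_summable_log hlog
        exact hmul.hasProd.tendsto_prod_nat
    rw [hf w]
    have := hprod.const_mul ((C:ℂ) * w)
    exact Tendsto.congr (fun n => (hFeq n w).symm) this
  -- uniform Cauchy on a closed ball
  set R : ℝ := r + 1 with hRdef
  have hR : 0 < R := by positivity
  set T : ℝ := ∑' k, 1 / b k with hTdef
  set tail : ℕ → ℝ := fun n => ∑' k, 1 / b (k + n) with htaildef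
  have htail0 : Tendsto tail atTop (𝓝 0) := by
    have hps := hbsum.hasSum.tendsto_sum_nat
    have h0 : Tendsto (fun n => T - ∑ i ∈ Finset.range n, 1 / b i) atTop (𝓝 (T - T)) :=
      tendsto_const_nhds.sub hps
    rw [sub_self] at h0
    refine Tendsto.congr (fun n => ?_) h0
    have h := Summable.sum_add_tsum_nat_add (f := fun k => 1 / b k) n hbsum
    simp only [htaildef]
    linarith [h]
  have tailnn : ∀ n, 0 ≤ tail n := fun n => tsum_nonneg (fun k => (one_div_pos.mpr (hb _)).le)
  have hTnn : 0 ≤ T := tsum_nonneg (fun k => (one_div_pos.mpr (hb _)).le)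
  have key : ∀ n m, n ≤ m → ∀ x ∈ Metric.closedBall (0:ℂ) R,
      ‖F m x - F n x‖ ≤ C * R * Real.exp (R*T) * (Real.exp (R * tail n) - 1) := by
    intro n m hnm x hx
    have hxR : ‖x‖ ≤ R := by rwa [Metric.mem_closedBall, dist_zero_right] at hx
    set u : ℕ → ℝ := fun k => ‖x‖ * (1 / b k) with hudef
    have hunn : ∀ k, 0 ≤ u k := fun k => mul_nonneg (norm_nonneg _) (one_div_pos.mpr (hb _)).le
    have hnormd : ∀ k, ‖x / (b k : ℂ)‖ = u k := by
      intro k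
      rw [norm_div, Complex.norm_real, Real.norm_eq_abs, abs_of_pos (hb k), div_eq_mul_one_div]
    have hfac : ∀ k, ‖(1:ℂ) - x / (b k : ℂ)‖ ≤ 1 + u k := by
      intro k
      calc ‖(1:ℂ) - x / (b k : ℂ)‖ ≤ ‖(1:ℂ)‖ + ‖x / (b k : ℂ)‖ := norm_sub_le _ _
        _ = 1 + u k := by rw [hnormd, norm_one]
    have hone_exp : ∀ k, (1:ℝ) + u k ≤ Real.exp (u k) := by
      intro k
      have := Real.add_one_le_exp (u k)
      linarith
    have hsum_bound : ∀ s : Finset ℕ, ∑ k ∈ s, u k ≤ ‖x‖ * T := by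
      intro s
      rw [hudef, ← Finset.mul_sum]
      refine mul_le_mul_of_nonneg_left ?_ (norm_nonneg x)
      exact Summable.sum_le_tsum s (fun k _ => (one_div_pos.mpr (hb _)).le) hbsum
    have hprodexp : ∀ s : Finset ℕ, ∏ k ∈ s, (1 + u k) ≤ Real.exp (∑ k ∈ s, u k) := by
      intro s
      calc ∏ k ∈ s, (1 + u k) ≤ ∏ k ∈ s, Real.exp (u k) :=
            Finset.prod_le_prod (fun k _ => by linarith [hunn k]) (fun k _ => hone_exp k)
        _ = Real.exp (∑ k ∈ s, u k) := (Real.exp_sum _ _).symm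
    have hhead : ‖∏ k ∈ Finset.range n, ((1:ℂ) - x / (b k : ℂ))‖ ≤ Real.exp (R * T) := by
      calc ‖∏ k ∈ Finset.range n, ((1:ℂ) - x / (b k : ℂ))‖
          = ∏ k ∈ Finset.range n, ‖(1:ℂ) - x / (b k : ℂ)‖ := norm_prod _ _
        _ ≤ ∏ k ∈ Finset.range n, (1 + u k) :=
            Finset.prod_le_prod (fun k _ => norm_nonneg _) (fun k _ => hfac k)
        _ ≤ Real.exp (∑ k ∈ Finset.range n, u k) := hprodexp _
        _ ≤ Real.exp (R * T) := by
            refine Real.exp_le_exp.mpr ?_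
            refine (hsum_bound _).trans ?_
            exact mul_le_mul_of_nonneg_right hxR hTnn
    have htailsum : ∑ k ∈ Finset.Ico n m, u k ≤ R * tail n := by
      have h1 : ∑ k ∈ Finset.Ico n m, (1 / b k) ≤ tail n := by
        rw [Finset.sum_Ico_eq_sum_range]
        have h2 : ∑ i ∈ Finset.range (m - n), 1 / b (n + i)
            = ∑ i ∈ Finset.range (m - n), 1 / b (i + n) :=
          Finset.sum_congr rfl (fun i _ => by rw [add_comm])
        rw [h2, htaildef]
        exact Summable.sum_le_tsum _ (fun k _ => (one_div_pos.mpr (hb _)).le)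
          ((summable_nat_add_iff n).mpr hbsum)
      calc ∑ k ∈ Finset.Ico n m, u k = ‖x‖ * ∑ k ∈ Finset.Ico n m, (1 / b k) := by
            rw [hudef, ← Finset.mul_sum]
        _ ≤ R * tail n := by
            refine mul_le_mul hxR h1 ?_ hR.le
            exact Finset.sum_nonneg (fun k _ => (one_div_pos.mpr (hb _)).le)
    have htailb : ‖∏ k ∈ Finset.Ico n m, ((1:ℂ) - x / (b k : ℂ)) - 1‖
        ≤ Real.exp (R * tail n) - 1 := by
      have h1 := aux_prod_sub_one (Finset.Ico n m) (fun k => -(x / (b k : ℂ)))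
      have h2 : ∀ k, (1:ℂ) + -(x / (b k : ℂ)) = 1 - x / (b k : ℂ) := fun k => by ring
      have h3 : ∀ k, ‖-(x / (b k : ℂ))‖ = u k := fun k => by rw [norm_neg, hnormd]
      simp only [h2, h3] at h1
      calc ‖∏ k ∈ Finset.Ico n m, ((1:ℂ) - x / (b k : ℂ)) - 1‖
          ≤ ∏ k ∈ Finset.Ico n m, (1 + u k) - 1 := h1
        _ ≤ Real.exp (∑ k ∈ Finset.Ico n m, u k) - 1 := by linarith [hprodexp (Finset.Ico n m)]
        _ ≤ Real.exp (R * tail n) - 1 := by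
            have := Real.exp_le_exp.mpr htailsum
            linarith
    have hdecomp : F m x - F n x = ((C:ℂ) * x * ∏ k ∈ Finset.range n, ((1:ℂ) - x / (b k : ℂ)))
        * (∏ k ∈ Finset.Ico n m, ((1:ℂ) - x / (b k : ℂ)) - 1) := by
      rw [hFeq, hFeq, ← Finset.prod_range_mul_prod_Ico _ hnm]
      ring
    rw [hdecomp, norm_mul, norm_mul, norm_mul]
    have hCn : ‖(C:ℂ)‖ = C := by rw [Complex.norm_real, Real.norm_eq_abs, abs_of_pos hC]
    rw [hCn]
    have e1 : 0 ≤ Real.exp (R * tail n) - 1 := by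
      have := Real.add_one_le_exp (R * tail n)
      have h0 : 0 ≤ R * tail n := mul_nonneg hR.le (tailnn n)
      linarith
    gcongr
  have hG : Tendsto (fun n => C * R * Real.exp (R*T) * (Real.exp (R * tail n) - 1)) atTop
      (𝓝 0) := by
    have h1 : Tendsto (fun n => R * tail n) atTop (𝓝 (R * 0)) := htail0.const_mul R
    rw [mul_zero] at h1
    have h2 : Tendsto (fun n => Real.exp (R * tail n) - 1) atTop (𝓝 (Real.exp 0 - 1)) :=
      ((Real.continuous_exp.tendsto 0).comp h1).sub_const 1
    rw [Real.exp_zero, sub_self] at h2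
    have h3 := h2.const_mul (C * R * Real.exp (R*T))
    rw [mul_zero] at h3
    exact h3
  have hCauchy : UniformCauchySeqOn F atTop (Metric.closedBall (0:ℂ) R) := by
    rw [Metric.uniformCauchySeqOn_iff]
    intro ε hε
    obtain ⟨N, hN⟩ := Filter.eventually_atTop.mp (hG.eventually (gt_mem_nhds hε))
    refine ⟨N, fun m hm n hn x hx => ?_⟩
    rcases le_total n m with h | h
    · rw [dist_eq_norm]
      calc ‖F m x - F n x‖ ≤ C * R * Real.exp (R*T) * (Real.exp (R * tail n) - 1) :=
            key n m h x hx
        _ < ε := hN n hn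
    · rw [dist_eq_norm, norm_sub_rev]
      calc ‖F n x - F m x‖ ≤ C * R * Real.exp (R*T) * (Real.exp (R * tail m) - 1) :=
            key m n h x hx
        _ < ε := hN m hm
  have htu : TendstoUniformlyOn F f atTop (Metric.closedBall (0:ℂ) R) :=
    hCauchy.tendstoUniformlyOn_of_tendsto (fun x _ => hptw x)
  have hlu : TendstoLocallyUniformlyOn F f atTop (Metric.ball (0:ℂ) R) :=
    htu.tendstoLocallyUniformlyOn.mono Metric.ball_subset_closedBall
  have hFd : ∀ n : ℕ, DifferentiableOn ℂ (F n) (Metric.ball (0:ℂ) R) := fun n =>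
    (Polynomial.differentiable _).differentiableOn
  have hderiv := hlu.deriv (Filter.Eventually.of_forall hFd) Metric.isOpen_ball
  have hzm : z ∈ Metric.ball (0:ℂ) R := by
    rw [Metric.mem_ball, dist_zero_right, hz]
    simp [hRdef]
  have hrm : (r:ℂ) ∈ Metric.ball (0:ℂ) R := by
    rw [Metric.mem_ball, dist_zero_right, Complex.norm_real, Real.norm_eq_abs, abs_of_pos hr]
    simp [hRdef]
  have h1 : Tendsto (fun n => deriv (F n) z) atTop (𝓝 (deriv f z)) := hderiv.tendsto_at hzm
  have h2 : Tendsto (fun n => deriv (F n) (r:ℂ)) atTop (𝓝 (deriv f (r:ℂ))) :=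
    hderiv.tendsto_at hrm
  exact le_of_tendsto_of_tendsto' ((continuous_norm.tendsto _).comp h2)
    ((continuous_norm.tendsto _).comp h1) hstep
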